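/- There exists an n-qubit product state whose stabilizer rank is exactly 2^n: it cannot be written as a ℂ-linear combination of fewer than 2^n stabilizer states. -/

import Mathlib

/-- An `n`-qubit product state: a tensor product of single-qubit unit vectors. -/
def IsProductState (n : ℕ) (v : EuclideanSpace ℂ (Fin n → Fin 2)) : Prop :=
  ∃ w : Fin n → EuclideanSpace ℂ (Fin 2),
    (∀ i, ‖w i‖ = 1) ∧ ∀ x : Fin n → Fin 2, v x = ∏ i : Fin n, w i (x i)

/-- Apply a single-qubit gate `M` to qubit `i` of an `n`-qubit state. -/
noncomputable def applyGate1 (n : ℕ) (i : Fin n) (M : Matrix (Fin 2) (Fin 2) ℂ)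
    (ψ : EuclideanSpace ℂ (Fin n → Fin 2)) : EuclideanSpace ℂ (Fin n → Fin 2) :=
  WithLp.toLp 2 (fun x => ∑ b : Fin 2, M (x i) b * ψ (Function.update x i b))

/-- Apply a CNOT gate with control `i` and target `j`. -/
noncomputable def applyCX (n : ℕ) (i j : Fin n)
    (ψ : EuclideanSpace ℂ (Fin n → Fin 2)) : EuclideanSpace ℂ (Fin n → Fin 2) :=
  WithLp.toLp 2 (fun x => ψ (Function.update x j (x i + x j)))

/-- The phase gate `S`. -/
noncomputable def sMat : Matrix (Fin 2) (Fin 2) ℂ := !![1, 0; 0, Complex.I]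

/-- The Hadamard gate `H`. -/
noncomputable def hMat : Matrix (Fin 2) (Fin 2) ℂ :=
  !![(Real.sqrt 2 : ℂ)⁻¹, (Real.sqrt 2 : ℂ)⁻¹;
     (Real.sqrt 2 : ℂ)⁻¹, -(Real.sqrt 2 : ℂ)⁻¹]

/-- The basis state `|0^n⟩`. -/
noncomputable def zeroState (n : ℕ) : EuclideanSpace ℂ (Fin n → Fin 2) :=
  WithLp.toLp 2 (fun x => if x = fun _ => 0 then 1 else 0)

/-- The `n`-qubit stabilizer states: the orbit of `|0^n⟩` under the Clifford
group generated by `S`, `H` and `CX` gates. -/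
inductive IsStab (n : ℕ) : EuclideanSpace ℂ (Fin n → Fin 2) → Prop
  | zero : IsStab n (zeroState n)
  | sgate (i : Fin n) {v} : IsStab n v → IsStab n (applyGate1 n i sMat v)
  | hgate (i : Fin n) {v} : IsStab n v → IsStab n (applyGate1 n i hMat v)
  | cx (i j : Fin n) {v} : IsStab n v → IsStab n (applyCX n i j v)

/-- A single gate-application step, used to enumerate stabilizer states. -/
noncomputable def stabStep (n : ℕ) :
    ((Fin n × Bool) ⊕ (Fin n × Fin n)) → EuclideanSpace ℂ (Fin n → Fin 2) →
      EuclideanSpace ℂ (Fin n → Fin 2)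
  | Sum.inl (i, true) => applyGate1 n i sMat
  | Sum.inl (i, false) => applyGate1 n i hMat
  | Sum.inr (i, j) => applyCX n i j

/-- The stabilizer state produced by a list of gate applications. -/
noncomputable def stabOf (n : ℕ) (l : List ((Fin n × Bool) ⊕ (Fin n × Fin n))) :
    EuclideanSpace ℂ (Fin n → Fin 2) :=
  l.foldr (stabStep n) (zeroState n)

lemma isStab_eq_stabOf {n : ℕ} {v} (h : IsStab n v) : ∃ l, stabOf n l = v := by
  induction h with
  | zero => exact ⟨[], rfl⟩
  | sgate i _ ih =>
    obtain ⟨l, hl⟩ := ih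
    exact ⟨Sum.inl (i, true) :: l, by rw [stabOf, List.foldr_cons]; rw [stabOf] at hl; rw [hl]; rfl⟩
  | hgate i _ ih =>
    obtain ⟨l, hl⟩ := ih
    exact ⟨Sum.inl (i, false) :: l, by rw [stabOf, List.foldr_cons]; rw [stabOf] at hl; rw [hl]; rfl⟩
  | cx i j _ ih =>
    obtain ⟨l, hl⟩ := ih
    exact ⟨Sum.inr (i, j) :: l, by rw [stabOf, List.foldr_cons]; rw [stabOf] at hl; rw [hl]; rfl⟩

/-- The (countable) set of all entries of all stabilizer states. -/
def stabEntries (n : ℕ) : Set ℂ :=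
  Set.range (fun p : (List ((Fin n × Bool) ⊕ (Fin n × Fin n))) × (Fin n → Fin 2) =>
    stabOf n p.1 p.2)

lemma stabEntries_countable (n : ℕ) : (stabEntries n).Countable :=
  Set.countable_range _

lemma mem_stabEntries {n : ℕ} {v} (h : IsStab n v) (x : Fin n → Fin 2) :
    v x ∈ stabEntries n := by
  obtain ⟨l, hl⟩ := isStab_eq_stabOf h
  exact ⟨(l, x), by simp only []; rw [hl]⟩


open Polynomial in
/-- Over a countable subfield of `ℂ` there is a transcendental element. -/
lemma exists_transcendental_subfield (L : Subfield ℂ) (hL : Countable L) :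
    ∃ a : ℂ, Transcendental (↥L) a := by
  have hfs : Countable (AddMonoidAlgebra ↥L ℕ) := by
    exact Countable.of_equiv _ AddMonoidAlgebra.coeffEquiv.symm
  have hcp : Countable (Polynomial ↥L) :=
    Countable.of_equiv _ (Polynomial.toFinsuppIso ↥L).toEquiv.symm
  have halg : {a : ℂ | IsAlgebraic (↥L) a} ⊆
      ⋃ p ∈ {p : Polynomial ↥L | p ≠ 0}, {a : ℂ | (Polynomial.aeval a) p = 0} := by
    rintro a ⟨p, hp0, hpa⟩
    exact Set.mem_biUnion hp0 hpa
  have hcount : {a : ℂ | IsAlgebraic (↥L) a}.Countable := by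
    refine Set.Countable.mono halg ?_
    refine Set.Countable.biUnion (Set.to_countable _) fun p hp => ?_
    have hmap : p.map (algebraMap (↥L) ℂ) ≠ 0 :=
      (Polynomial.map_ne_zero_iff (algebraMap (↥L) ℂ).injective).2 hp
    have : {a : ℂ | (Polynomial.aeval a) p = 0} ⊆ {a : ℂ | (p.map (algebraMap (↥L) ℂ)).IsRoot a} := by
      intro a ha
      have : (Polynomial.aeval a) p = 0 := ha
      rwa [Polynomial.aeval_def, Polynomial.eval₂_eq_eval_map] at this
    exact ((Polynomial.finite_setOf_isRoot hmap).subset this).countable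
  have : ¬ (Set.univ : Set ℂ) ⊆ {a : ℂ | IsAlgebraic (↥L) a} := by
    intro h
    exact not_countable_complex (hcount.mono h)
  obtain ⟨a, -, ha⟩ := Set.not_subset.1 this
  exact ⟨a, ha⟩

/-- Transcendence passes from a larger subfield to a subalgebra contained in it. -/
lemma transcendental_of_subset {K : Subfield ℂ} (A : Subalgebra (↥K) ℂ) (L : Subfield ℂ)
    (hsub : (A : Set ℂ) ⊆ (L : Set ℂ)) {a : ℂ} (h : Transcendental (↥L) a) :
    Transcendental (↥A) a := by
  intro hae
  apply h
  obtain ⟨p, hp0, hpa⟩ := hae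
  let g : ↥A →+* ↥L :=
    { toFun := fun z => (⟨z.1, hsub z.2⟩ : ↥L)
      map_one' := rfl
      map_mul' := fun x y => Subtype.ext rfl
      map_zero' := rfl
      map_add' := fun x y => Subtype.ext rfl }
  have hginj : Function.Injective g := by
    intro x y hxy
    have h2 : ((g x : ↥L) : ℂ) = ((g y : ↥L) : ℂ) := congrArg Subtype.val hxy
    exact Subtype.ext h2
  refine ⟨p.map g, (Polynomial.map_ne_zero_iff hginj).2 hp0, ?_⟩
  rw [Polynomial.aeval_def, Polynomial.eval₂_eq_eval_map, Polynomial.map_map]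
  rw [Polynomial.aeval_def, Polynomial.eval₂_eq_eval_map] at hpa
  have : (algebraMap (↥L) ℂ).comp g = algebraMap (↥A) ℂ := RingHom.ext fun z => rfl
  rw [this]
  exact hpa

/-- Existence of an algebraically independent tuple over a countable subfield of `ℂ`. -/
lemma exists_algIndep (K : Subfield ℂ) (hK : Countable K) (d : ℕ) :
    ∃ x : Fin d → ℂ, AlgebraicIndependent (↥K) x := by
  induction d with
  | zero =>
    exact ⟨fun i => 0, algebraicIndependent_empty_type_iff.2 (algebraMap (↥K) ℂ).injective⟩
  | succ d ih =>
    obtain ⟨x, hx⟩ := ih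
    set L : Subfield ℂ := Subfield.closure ((K : Set ℂ) ∪ Set.range x) with hLdef
    have hLc : Countable ↥L := by
      rw [← Cardinal.mk_le_aleph0_iff]
      refine (Subfield.cardinalMk_closure_le_max _).trans ?_
      rw [max_le_iff]
      constructor
      · rw [Cardinal.mk_le_aleph0_iff]
        have : ((K : Set ℂ) ∪ Set.range x).Countable :=
          (K.carrier.to_countable).union (Set.countable_range x)
        exact this.to_subtype
      · exact le_rfl
    obtain ⟨a, ha⟩ := exists_transcendental_subfield L hLc
    have hsub : ((Algebra.adjoin (↥K) (Set.range x) : Subalgebra (↥K) ℂ) : Set ℂ) ⊆ (L : Set ℂ) := by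
      intro z hz
      have hz' : z ∈ (Algebra.adjoin (↥K) (Set.range x)).toSubring := hz
      rw [Algebra.adjoin_eq_ring_closure] at hz'
      have : Subring.closure (Set.range (algebraMap (↥K) ℂ) ∪ Set.range x) ≤ L.toSubring := by
        rw [Subring.closure_le]
        rintro w (⟨c, rfl⟩ | hw)
        · exact Subfield.subset_closure (Set.mem_union_left _ c.2)
        · exact Subfield.subset_closure (Set.mem_union_right _ hw)
      exact this hz'
    have ha' : Transcendental (↥(Algebra.adjoin (↥K) (Set.range x))) a :=
      transcendental_of_subset _ L hsub ha
    have hopt : AlgebraicIndependent (↥K) fun o : Option (Fin d) => o.elim a x :=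
      (hx.option_iff_transcendental a).2 ha'
    refine ⟨Fin.cons a x, ?_⟩
    have he : (Fin.cons a x : Fin (d+1) → ℂ) ∘ (finSuccEquiv d).symm =
        fun o : Option (Fin d) => o.elim a x := by
      funext o
      cases o with
      | none => simp
      | some i => simp
    exact (algebraicIndependent_equiv' (finSuccEquiv d).symm he).1 hopt


lemma exists_annihilator {K : Type*} [Field K] {X : Type*} [Fintype X] [DecidableEq X] {k : ℕ}
    (hk : k < Fintype.card X) (S : Fin k → X → K) :
    ∃ u : X → K, u ≠ 0 ∧ ∀ i, ∑ x, S i x * u x = 0 := by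
  set f : (X → K) →ₗ[K] (Fin k → K) := (Matrix.of S).mulVecLin with hf
  have hker : LinearMap.ker f ≠ ⊥ := by
    intro hbot
    have hinj : Function.Injective f := LinearMap.ker_eq_bot.1 hbot
    have := LinearMap.finrank_le_finrank_of_injective hinj
    rw [Module.finrank_pi, Module.finrank_pi] at this
    simp at this
    omega
  obtain ⟨u, humem, hu0⟩ := (Submodule.ne_bot_iff _).1 hker
  refine ⟨u, hu0, fun i => ?_⟩
  have : f u = 0 := humem
  have hi := congrFun this i
  simpa [f, Matrix.mulVecLin, Matrix.mulVec, dotProduct] using hi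

open MvPolynomial in
theorem stmt_19 (n : ℕ) :
    ∃ v : EuclideanSpace ℂ (Fin n → Fin 2), IsProductState n v ∧
      ¬ ∃ (k : ℕ) (_ : k < 2 ^ n) (s : Fin k → EuclideanSpace ℂ (Fin n → Fin 2))
          (α : Fin k → ℂ), (∀ i, IsStab n (s i)) ∧ v = ∑ i, α i • s i := by
  classical
  set K : Subfield ℂ := Subfield.closure (stabEntries n) with hK
  have hKc : Countable ↥K := by
    rw [← Cardinal.mk_le_aleph0_iff]
    refine (Subfield.cardinalMk_closure_le_max _).trans ?_
    rw [max_le_iff]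
    exact ⟨Cardinal.mk_le_aleph0_iff.2 (stabEntries_countable n).to_subtype, le_rfl⟩
  obtain ⟨xx, hxx⟩ := exists_algIndep K hKc (n * 2)
  set t : Fin n × Fin 2 → ℂ := xx ∘ finProdFinEquiv with ht
  have hindep : AlgebraicIndependent (↥K) t := hxx.comp _ finProdFinEquiv.injective
  set w0 : Fin n → EuclideanSpace ℂ (Fin 2) := fun i => WithLp.toLp 2 (fun b => t (i, b)) with hw0
  have hw0ne : ∀ i, w0 i ≠ 0 := fun i h => hindep.ne_zero (i, 0) (congrArg (fun v => v 0) h)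
  have hnorm : ∀ i, ‖w0 i‖ ≠ 0 := fun i => norm_ne_zero_iff.2 (hw0ne i)
  set w : Fin n → EuclideanSpace ℂ (Fin 2) := fun i => ((‖w0 i‖⁻¹ : ℝ) : ℂ) • w0 i with hw
  have hwnorm : ∀ i, ‖w i‖ = 1 := by
    intro i
    rw [hw]
    simp only [norm_smul, Complex.norm_real, Real.norm_eq_abs,
      abs_of_nonneg (inv_nonneg.2 (norm_nonneg _))]
    exact inv_mul_cancel₀ (hnorm i)
  have hwapp : ∀ i b, w i b = ((‖w0 i‖⁻¹ : ℝ) : ℂ) * t (i, b) := by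
    intro i b
    rw [hw]
    simp [PiLp.smul_apply, smul_eq_mul, hw0]
  refine ⟨WithLp.toLp 2 (fun x => ∏ i, w i (x i)), ⟨w, hwnorm, fun x => rfl⟩, ?_⟩
  rintro ⟨k, hk, s, α, hstab, hv⟩
  -- stabilizer entries lie in K
  set S : Fin k → (Fin n → Fin 2) → ↥K := fun i x =>
    ⟨s i x, Subfield.subset_closure (mem_stabEntries (hstab i) x)⟩ with hS
  have hkcard : k < Fintype.card (Fin n → Fin 2) := by
    simpa [Fintype.card_fun] using hk
  obtain ⟨u, hu0, hu⟩ := exists_annihilator hkcard S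
  -- the pairing
  set A : ℂ := ∑ x : Fin n → Fin 2, (u x : ℂ) * ∏ i, w i (x i) with hA
  -- (a) A = 0
  have hA0 : A = 0 := by
    have hvx : ∀ x : Fin n → Fin 2, (∏ i, w i (x i)) = ∑ i, α i * s i x := by
      intro x
      have h3 := congrArg (fun v => v x) hv
      have h4 : (∑ i, α i • s i) x = ∑ i, (α i • s i) x := by rw [WithLp.ofLp_sum]; exact Finset.sum_apply x Finset.univ _
      rw [h4] at h3
      exact h3
    rw [hA]
    calc ∑ x : Fin n → Fin 2, (u x : ℂ) * ∏ i, w i (x i)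
        = ∑ x : Fin n → Fin 2, ∑ i, α i * ((u x : ℂ) * s i x) := by
          refine Finset.sum_congr rfl fun x _ => ?_
          rw [hvx x, Finset.mul_sum]
          exact Finset.sum_congr rfl fun i _ => by ring
      _ = ∑ i, α i * ∑ x : Fin n → Fin 2, (u x : ℂ) * s i x := by
          rw [Finset.sum_comm]
          exact Finset.sum_congr rfl fun i _ => (Finset.mul_sum _ _ _).symm
      _ = 0 := by
          refine Finset.sum_eq_zero fun i _ => ?_
          have h2 : ((∑ x, S i x * u x : ↥K) : ℂ) = 0 := by rw [hu i]; rfl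
          push_cast at h2
          have h3 : ∑ x : Fin n → Fin 2, (u x : ℂ) * s i x = 0 := by
            rw [← h2]
            exact Finset.sum_congr rfl fun x _ => mul_comm _ _
          rw [h3, mul_zero]
  -- (b) A ≠ 0
  set P : MvPolynomial (Fin n × Fin 2) ↥K :=
    ∑ x : Fin n → Fin 2, MvPolynomial.C (u x) * ∏ i, MvPolynomial.X (i, x i) with hP
  have hPne : P ≠ 0 := by
    obtain ⟨x₀, hx₀'⟩ := Function.ne_iff.1 hu0
    have hx₀ : u x₀ ≠ 0 := by simpa using hx₀'
    intro h0
    set y : Fin n × Fin 2 → ↥K := fun p => if x₀ p.1 = p.2 then (1 : ↥K) else 0 with hy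
    have hz : MvPolynomial.eval y P = 0 := by rw [h0, map_zero]
    rw [hP, MvPolynomial.eval_sum] at hz
    simp only [map_mul, MvPolynomial.eval_C, MvPolynomial.eval_prod,
      MvPolynomial.eval_X, hy] at hz
    have heval : ∀ x : Fin n → Fin 2,
        (∏ i, if x₀ i = x i then (1 : ↥K) else 0) = if x₀ = x then 1 else 0 := by
      intro x
      rw [Finset.prod_boole]
      congr 1
      refine propext ⟨fun h => funext fun i => h i (Finset.mem_univ i), fun h i _ => by rw [h]⟩
    rw [Finset.sum_congr rfl (fun x _ => by rw [heval x])] at hz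
    simp only [mul_ite, mul_one, mul_zero, Finset.sum_ite_eq, Finset.mem_univ,
      if_true] at hz
    exact hx₀ hz
  have haeval : MvPolynomial.aeval t P ≠ 0 := fun h =>
    hPne (hindep.eq_zero_of_aeval_eq_zero P h)
  have hAne : A ≠ 0 := by
    have hexp : A = (∏ i, ((‖w0 i‖⁻¹ : ℝ) : ℂ)) * MvPolynomial.aeval t P := by
      rw [hA, hP, map_sum, Finset.mul_sum]
      refine Finset.sum_congr rfl fun x _ => ?_
      rw [map_mul, MvPolynomial.aeval_C, map_prod]
      simp only [MvPolynomial.aeval_X]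
      have : (∏ i, w i (x i)) = (∏ i, ((‖w0 i‖⁻¹ : ℝ) : ℂ)) * ∏ i, t (i, x i) := by
        rw [← Finset.prod_mul_distrib]
        exact Finset.prod_congr rfl fun i _ => hwapp i (x i)
      rw [this]
      have halg : (algebraMap (↥K) ℂ) (u x) = (u x : ℂ) := rfl
      rw [halg]
      ring
    rw [hexp]
    refine mul_ne_zero ?_ haeval
    exact Finset.prod_ne_zero_iff.2 fun i _ => by
      simpa using inv_ne_zero (hnorm i)
  exact hAne hA0
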